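/- For n ≥ 0, the integral (2/π) ∫_0^π (2cos θ)^n sin²θ dθ equals 0 if n is odd, and equals the Catalan number (1/(m+1))·binom(2m, m) if n = 2m is even. -/

import Mathlib

open Real

lemma cos_int_rec (n : ℕ) :
    (∫ θ in (0:ℝ)..π, Real.cos θ ^ (n + 2)) =
      ((n : ℝ) + 1) / ((n : ℝ) + 2) * ∫ θ in (0:ℝ)..π, Real.cos θ ^ n := by
  rw [integral_cos_pow]
  simp

lemma cos_int_odd (m : ℕ) : (∫ θ in (0:ℝ)..π, Real.cos θ ^ (2 * m + 1)) = 0 := by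
  induction m with
  | zero => simp
  | succ k ih =>
    have : 2 * (k + 1) + 1 = (2 * k + 1) + 2 := by ring
    rw [this, cos_int_rec, ih, mul_zero]

lemma cos_int_even (m : ℕ) :
    (∫ θ in (0:ℝ)..π, Real.cos θ ^ (2 * m)) = π * ((2 * m).choose m : ℝ) / 4 ^ m := by
  induction m with
  | zero => simp
  | succ k ih =>
    have h2 : 2 * (k + 1) = 2 * k + 2 := by ring
    rw [h2, cos_int_rec, ih]
    have key : ((k : ℝ) + 1) * ((2 * (k + 1)).choose (k + 1) : ℝ)
        = 2 * (2 * (k : ℝ) + 1) * ((2 * k).choose k : ℝ) := by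
      have := Nat.succ_mul_centralBinom_succ k
      simp only [Nat.centralBinom] at this
      exact_mod_cast this
    have h4 : (4 : ℝ) ^ (k + 1) = 4 ^ k * 4 := by ring
    have hk2 : (2 * (k : ℝ) + 2) ≠ 0 := by positivity
    have h4k : (4 : ℝ) ^ k ≠ 0 := by positivity
    have hcast : ((2 * k + 2).choose (k + 1) : ℝ) = ((2 * (k + 1)).choose (k + 1) : ℝ) := by
      norm_num [h2]
    push_cast
    rw [hcast, h4]
    field_simp
    linear_combination (-2) * key

/-- The `n`-th trace moment of `SU(2)`: `(2/π) ∫_0^π (2 cos θ)^n sin² θ dθ` is `0`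
for `n` odd and the Catalan number `(1/(m+1)) * binom(2m, m)` for `n = 2m` even. -/
theorem trace_moment_SU2 (n : ℕ) :
    (2 / π) * ∫ θ in (0:ℝ)..π, (2 * Real.cos θ) ^ n * Real.sin θ ^ 2 =
      if Odd n then 0 else (1 / ((n / 2 : ℕ) + 1 : ℝ)) * (n.choose (n / 2) : ℝ) := by
  have hsplit : (∫ θ in (0:ℝ)..π, (2 * Real.cos θ) ^ n * Real.sin θ ^ 2)
      = 2 ^ n * ((∫ θ in (0:ℝ)..π, Real.cos θ ^ n) - ∫ θ in (0:ℝ)..π, Real.cos θ ^ (n + 2)) := by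
    have hcongr : (∫ θ in (0:ℝ)..π, (2 * Real.cos θ) ^ n * Real.sin θ ^ 2)
        = ∫ θ in (0:ℝ)..π, 2 ^ n * (Real.cos θ ^ n - Real.cos θ ^ (n + 2)) := by
      apply intervalIntegral.integral_congr
      intro θ _
      simp only [Real.sin_sq]
      ring
    rw [hcongr, intervalIntegral.integral_const_mul, intervalIntegral.integral_sub]
    · exact (Continuous.intervalIntegrable (by fun_prop) _ _)
    · exact (Continuous.intervalIntegrable (by fun_prop) _ _)
  rcases Nat.even_or_odd' n with ⟨m, rfl | rfl⟩
  · have hdiv : (2 * m) / 2 = m := by omega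
    rw [hsplit]
    have h2 : 2 * m + 2 = 2 * (m + 1) := by ring
    rw [h2, cos_int_even, cos_int_even]
    have hodd : ¬ Odd (2 * m) := by rw [Nat.not_odd_iff_even]; exact even_two_mul m
    rw [if_neg hodd, hdiv]
    have key : ((m : ℝ) + 1) * ((2 * (m + 1)).choose (m + 1) : ℝ)
        = 2 * (2 * (m : ℝ) + 1) * ((2 * m).choose m : ℝ) := by
      have := Nat.succ_mul_centralBinom_succ m
      simp only [Nat.centralBinom] at this
      exact_mod_cast this
    have hπ : (π : ℝ) ≠ 0 := Real.pi_ne_zero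
    have h4m : (4 : ℝ) ^ m ≠ 0 := by positivity
    have hm1 : ((m : ℝ) + 1) ≠ 0 := by positivity
    have h4s : (4 : ℝ) ^ (m + 1) = 4 ^ m * 4 := by ring
    have h2p : (2 : ℝ) ^ (2 * m) = 4 ^ m := by
      rw [pow_mul]; norm_num
    rw [h2p, h4s]
    field_simp
    linear_combination (-2) * key
  · rw [hsplit]
    have h2 : 2 * m + 1 + 2 = 2 * (m + 1) + 1 := by ring
    rw [h2, cos_int_odd, cos_int_odd]
    simp [Nat.odd_iff]
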